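/- Let P be the doubly stochastic transition matrix of the top-to-random shuffle on G(m,1,n) with m > 1 (uniform over the mn group elements appearing in ⁽ᵐ⁾Ш_{1,n-1}, i.e., P = (1/(mn))·L_{⁽ᵐ⁾Ш} in the regular representation). Then there is a constant α > 0 such that |P^k_{ij} − 1/(m^n n!)| ≤ α·((n−1)/n)^k for all k ≥ 1 and all i,j. -/

import Mathlib

open Finset Multiplicative

/-- The cyclic group of order `m` (written multiplicatively). -/
abbrev Cm (m : ℕ) : Type := Multiplicative (ZMod m)

/-- The action of `S_n` on `(C_m)^n` permuting coordinates. -/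
def wrAct (m n : ℕ) : Equiv.Perm (Fin n) →* MulAut (Fin n → Cm m) where
  toFun σ :=
    { toFun := fun f => f ∘ σ.symm
      invFun := fun f => f ∘ σ
      left_inv := fun f => by ext i; simp
      right_inv := fun f => by ext i; simp
      map_mul' := fun f g => rfl }
  map_one' := by ext f i; rfl
  map_mul' := fun σ τ => by ext f i; rfl

/-- The wreath product `C_m ≀ S_n = (C_m)^n ⋊ S_n`, i.e. the group `G(m,1,n)`. -/
abbrev GG (m n : ℕ) := (Fin n → Cm m) ⋊[wrAct m n] Equiv.Perm (Fin n)

def ggEquiv (m n : ℕ) : GG m n ≃ (Fin n → Cm m) × Equiv.Perm (Fin n) where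
  toFun g := (g.left, g.right)
  invFun p := ⟨p.1, p.2⟩
  left_inv _ := rfl
  right_inv _ := rfl

instance (m n : ℕ) [NeZero m] : Fintype (GG m n) :=
  Fintype.ofEquiv _ (ggEquiv m n).symm

instance (m n : ℕ) : DecidableEq (GG m n) := (ggEquiv m n).decidableEq

/-- The generator `s_{i+1}` of `G(m,1,n)`: the simple transposition `(i+1, i+2)`
(0-indexed: `sGen m n i` swaps positions `i` and `i+1`). -/
def sGen (m n : ℕ) (i : ℕ) : GG m n :=
  if h : i + 1 < n then
    SemidirectProduct.inr (Equiv.swap ⟨i, Nat.lt_of_succ_lt h⟩ ⟨i + 1, h⟩) else 1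

/-- The generator `t_{i+1}` of `G(m,1,n)`, rotating the `(i+1)`-st card (0-indexed). -/
def tGen (m n : ℕ) (i : ℕ) : GG m n :=
  if h : i < n then
    SemidirectProduct.inl (Pi.mulSingle ⟨i, h⟩ (ofAdd (1 : ZMod m))) else 1

/-- `⁽ᵐ⁾Ш_{1,k-1} = (1 + s_{k-1} + s_{k-2}s_{k-1} + ⋯ + s_1⋯s_{k-1})(1 + t_k + ⋯ + t_k^{m-1})`,
viewed inside `ℤ G(m,1,n)` (case `k = n` is the 1-shuffle element of `G(m,1,n)` itself). -/
noncomputable def msha (m n k : ℕ) : MonoidAlgebra ℤ (GG m n) :=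
  (∑ l ∈ Finset.range k, MonoidAlgebra.of ℤ (GG m n)
      (((List.range l).map (fun p => sGen m n (k - 1 - l + p))).prod)) *
  (∑ a ∈ Finset.range m, MonoidAlgebra.of ℤ (GG m n) (tGen m n (k - 1) ^ a))

/-- The 1-shuffle element `⁽ᵐ⁾Ш_{1,n-1}` in the real group algebra `ℝ G(m,1,n)`. -/
noncomputable def mshaR (m n : ℕ) : MonoidAlgebra ℝ (GG m n) :=
  (∑ l ∈ Finset.range n, MonoidAlgebra.of ℝ (GG m n)
      (((List.range l).map (fun p => sGen m n (n - 1 - l + p))).prod)) *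
  (∑ a ∈ Finset.range m, MonoidAlgebra.of ℝ (GG m n) (tGen m n (n - 1) ^ a))

/-- The transition matrix of the top-to-random shuffle on `G(m,1,n)`: the matrix of
`(1/(mn))·L_{⁽ᵐ⁾Ш_{1,n-1}}` in the regular representation, i.e.
`P g h = (1/(mn)) · (coefficient of `g h⁻¹` in `⁽ᵐ⁾Ш_{1,n-1}`)`. -/
noncomputable def P (m n : ℕ) [NeZero m] : Matrix (GG m n) (GG m n) ℝ :=
  fun g h => ((m * n : ℝ))⁻¹ * (mshaR m n).coeff (g * h⁻¹)

theorem Equiv.Perm.apply_inv_self {α : Type*} (f : Equiv.Perm α) (x : α) : f (f⁻¹ x) = x :=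
  Equiv.apply_symm_apply f x

theorem Equiv.Perm.inv_apply_self {α : Type*} (f : Equiv.Perm α) (x : α) : f⁻¹ (f x) = x :=
  Equiv.symm_apply_apply f x

namespace TTR

set_option linter.unusedSectionVars false

variable (m n : ℕ) [NeZero m] [NeZero n]

lemma npos : 0 < n := Nat.pos_of_ne_zero (NeZero.ne n)

abbrev MV := Fin n × ZMod m

def top : Fin n := ⟨n - 1, by have := npos n; omega⟩

def pk (l : Fin n) : Fin n := ⟨n - 1 - l.val, by have := npos n; omega⟩

def cyc (l : ℕ) : GG m n :=
  ((List.range l).map (fun p => sGen m n (n - 1 - l + p))).prod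

def grp (e : MV m n) : GG m n :=
  cyc m n e.1.val * SemidirectProduct.inl (Pi.mulSingle (top n) (ofAdd e.2))

lemma mulSingle_apply' (i j : Fin n) (v : Cm m) :
    (Pi.mulSingle i v : Fin n → Cm m) j = if j = i then v else 1 :=
  Pi.mulSingle_apply i v j

lemma sGen_left (i : ℕ) : (sGen m n i).left = 1 := by
  unfold sGen; split <;> rfl

lemma sGen_right (i : ℕ) (h : i + 1 < n) :
    (sGen m n i).right = Equiv.swap ⟨i, Nat.lt_of_succ_lt h⟩ ⟨i + 1, h⟩ := by
  unfold sGen; rw [dif_pos h]; rfl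

lemma sGen_list_left (L : List ℕ) : ((L.map (sGen m n)).prod).left = 1 := by
  induction L with
  | nil => rfl
  | cons a L ih =>
    rw [List.map_cons, List.prod_cons, SemidirectProduct.mul_left, ih, map_one,
      sGen_left, one_mul]

lemma cyc_left (l : ℕ) : (cyc m n l).left = 1 := by
  have : cyc m n l = (((List.range l).map (fun p => n - 1 - l + p)).map (sGen m n)).prod := by
    unfold cyc; rw [List.map_map]; rfl
  rw [this, sGen_list_left]

lemma cyc_succ (l : ℕ) (hl : l + 1 ≤ n - 1) :
    cyc m n (l + 1) = sGen m n (n - 1 - (l+1)) * cyc m n l := by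
  unfold cyc
  have h1 : (List.range (l+1)).map (fun p => sGen m n (n - 1 - (l+1) + p)) =
      sGen m n (n - 1 - (l+1)) :: (List.range l).map (fun p => sGen m n (n - 1 - l + p)) := by
    rw [List.range_succ_eq_map, List.map_cons, List.map_map]
    congr 1
    apply List.map_congr_left
    intro p hp
    simp only [Function.comp_apply]
    congr 1
    omega
  rw [h1, List.prod_cons]

lemma cyc_right_apply (l : ℕ) (hl : l < n) (x : Fin n) :
    ((cyc m n l).right x).val =
      if x.val = n - 1 then n - 1 - l
      else if n - 1 - l ≤ x.val then x.val + 1 else x.val := by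
  induction l with
  | zero =>
    have h0 : cyc m n 0 = 1 := rfl
    rw [h0]
    have hx := x.isLt
    simp only [SemidirectProduct.one_right, Equiv.Perm.coe_one, id_eq]
    split_ifs <;> omega
  | succ l ih =>
    have hl' : l < n := Nat.lt_of_succ_lt hl
    have hll : l + 1 ≤ n - 1 := by omega
    rw [cyc_succ m n l hll, SemidirectProduct.mul_right]
    have hs : n - 1 - (l+1) + 1 < n := by omega
    rw [sGen_right m n _ hs]
    simp only [Equiv.Perm.mul_apply]
    have hy := ih hl'
    set y := (cyc m n l).right x with hy'
    have hylt := y.isLt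
    have hxlt := x.isLt
    rw [Equiv.swap_apply_def, apply_ite (Fin.val), apply_ite (Fin.val)]
    simp only [Fin.ext_iff]
    split_ifs at hy ⊢ <;> omega

lemma cyc_right_inv_apply (l : ℕ) (hl : l < n) (x : Fin n) :
    (((cyc m n l).right)⁻¹ x).val =
      if x.val = n - 1 - l then n - 1
      else if n - 1 - l < x.val then x.val - 1 else x.val := by
  set y := ((cyc m n l).right)⁻¹ x with hy
  have hxy : (cyc m n l).right y = x := by
    rw [hy]; exact Equiv.Perm.apply_inv_self _ _
  have h := cyc_right_apply m n l hl y
  rw [hxy] at h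
  have hylt := y.isLt
  have hxlt := x.isLt
  split_ifs at h ⊢ <;> omega

lemma cyc_right_top (l : Fin n) : (cyc m n l.val).right (top n) = pk n l := by
  have h := cyc_right_apply m n l.val l.isLt (top n)
  apply Fin.val_injective
  rw [h]
  have ht : (top n).val = n - 1 := rfl
  simp [ht, pk]

lemma grp_right (e : MV m n) : (grp m n e).right = (cyc m n e.1.val).right := by
  unfold grp
  rw [SemidirectProduct.mul_right, SemidirectProduct.right_inl, mul_one]

lemma wrAct_apply (σ : Equiv.Perm (Fin n)) (f : Fin n → Cm m) (q : Fin n) :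
    (wrAct m n σ f) q = f (σ.symm q) := rfl

lemma grp_left (e : MV m n) :
    (grp m n e).left = Pi.mulSingle (pk n e.1) (ofAdd e.2) := by
  unfold grp
  rw [SemidirectProduct.mul_left, cyc_left, one_mul, SemidirectProduct.left_inl]
  funext q
  rw [wrAct_apply, mulSingle_apply', mulSingle_apply']
  have hiff : ((cyc m n e.1.val).right.symm q = top n) ↔ (q = pk n e.1) := by
    rw [Equiv.symm_apply_eq, cyc_right_top]
  rcases eq_or_ne q (pk n e.1) with h | h
  · rw [if_pos (hiff.mpr h), if_pos h]
  · rw [if_neg (fun hc => h (hiff.mp hc)), if_neg h]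



/-! ### Section B: words, trajectories, dynamics -/

def gprod : List (MV m n) → GG m n
  | [] => 1
  | e :: W => gprod W * grp m n e

def sta (W : List (MV m n)) : GG m n := (gprod m n W)⁻¹

lemma sta_cons (e : MV m n) (W : List (MV m n)) :
    sta m n (e :: W) = (grp m n e)⁻¹ * sta m n W := by
  simp only [sta, gprod, mul_inv_rev]

lemma sta_nil : sta m n [] = 1 := by simp [sta, gprod]

lemma sta_cons_right (e : MV m n) (W : List (MV m n)) :
    (sta m n (e :: W)).right = ((cyc m n e.1.val).right)⁻¹ * (sta m n W).right := by
  rw [sta_cons, SemidirectProduct.mul_right, SemidirectProduct.inv_right, grp_right]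

lemma sta_cons_left (e : MV m n) (W : List (MV m n)) (q : Fin n) :
    (sta m n (e :: W)).left q =
      (if q = top n then ofAdd (-e.2) else 1) *
        (sta m n W).left ((cyc m n e.1.val).right q) := by
  rw [sta_cons, SemidirectProduct.mul_left]
  have h1 : ((grp m n e)⁻¹).left q = if q = top n then ofAdd (-e.2) else 1 := by
    rw [SemidirectProduct.inv_left, grp_right, grp_left, wrAct_apply]
    have : (((cyc m n e.1.val).right)⁻¹).symm = (cyc m n e.1.val).right := rfl
    rw [this]
    rw [Pi.inv_apply, mulSingle_apply']
    rcases eq_or_ne q (top n) with h | h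
    · rw [if_pos h, if_pos (by rw [h, cyc_right_top])]
      rfl
    · rw [if_neg h, if_neg, inv_one]
      intro hc
      apply h
      have := (cyc m n e.1.val).right.injective (hc.trans (cyc_right_top m n e.1).symm)
      exact this
  have h2 : (wrAct m n ((grp m n e)⁻¹).right) ((sta m n W).left) q =
      (sta m n W).left ((cyc m n e.1.val).right q) := by
    rw [SemidirectProduct.inv_right, grp_right, wrAct_apply]
    rfl
  rw [Pi.mul_apply, h1, h2]

/-- card sequence with rotation letters (reverse-chronological): `cwd` -/
def cwd : List (MV m n) → List (MV m n)
  | [] => []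
  | e :: W => (((sta m n W).right).symm (pk n e.1), e.2) :: cwd W

def touched (W : List (MV m n)) : List (Fin n) := (cwd m n W).map Prod.fst

/-- keep first occurrences -/
def dists : List (Fin n) → List (Fin n)
  | [] => []
  | a :: L => a :: (dists L).filter (fun x => x ≠ a)

def rwd (W : List (MV m n)) : List (Fin n) := dists n (touched m n W)

def crots (cw : List (MV m n)) (c : Fin n) : ZMod m :=
  -((cw.filter (fun q => q.1 = c)).map Prod.snd).sum

def rots (W : List (MV m n)) (c : Fin n) : ZMod m := crots m n (cwd m n W) c

lemma crots_cons (d : Fin n) (r : ZMod m) (cw : List (MV m n)) (c : Fin n) :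
    crots m n ((d, r) :: cw) c = (if d = c then -r else 0) + crots m n cw c := by
  unfold crots
  rcases eq_or_ne d c with h | h
  · rw [List.filter_cons_of_pos (by simp [h]), List.map_cons, List.sum_cons, if_pos h]
    ring
  · rw [List.filter_cons_of_neg (by simp [h]), if_neg h, zero_add]

lemma mem_dists (L : List (Fin n)) (a : Fin n) : a ∈ dists n L ↔ a ∈ L := by
  induction L with
  | nil => simp [dists]
  | cons b L ih =>
    simp only [dists, List.mem_cons, List.mem_filter, decide_eq_true_eq]
    constructor
    · rintro (h | ⟨h, _⟩)
      · exact Or.inl h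
      · exact Or.inr (ih.mp h)
    · rintro (h | h)
      · exact Or.inl h
      · rcases eq_or_ne a b with hb | hb
        · exact Or.inl hb
        · exact Or.inr ⟨ih.mpr h, hb⟩

lemma nodup_dists (L : List (Fin n)) : (dists n L).Nodup := by
  induction L with
  | nil => exact List.nodup_nil
  | cons b L ih =>
    refine List.Nodup.cons ?_ (List.Nodup.filter _ ih)
    intro hc
    simp only [List.mem_filter, decide_eq_true_eq] at hc
    exact hc.2 rfl

lemma length_dists_le (L : List (Fin n)) : (dists n L).length ≤ n := by
  have h := List.Nodup.length_le_card (nodup_dists n L)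
  simpa using h

/-- generic indexOf-filter lemma -/
lemma indexOf_filter_ne {A : Type*} [DecidableEq A] (L : List A) (hnd : L.Nodup)
    (a b : A) (ha : a ∈ L) (hab : a ≠ b) :
    (L.filter (fun x => x ≠ b)).idxOf a =
      L.idxOf a - (if L.idxOf b < L.idxOf a then 1 else 0) := by
  induction L with
  | nil => simp at ha
  | cons h t ih =>
    have hnd' : t.Nodup := (List.nodup_cons.mp hnd).2
    rcases eq_or_ne h b with hb | hb
    · subst hb
      have hbt : h ∉ t := (List.nodup_cons.mp hnd).1
      have ha' : a ∈ t := by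
        rcases List.mem_cons.mp ha with hh | hh
        · exact absurd hh hab
        · exact hh
      rw [List.filter_cons_of_neg (by simp), List.filter_eq_self.mpr (by
        intro x hx
        simp only [decide_eq_true_eq]
        intro hxb; subst hxb; exact hbt hx)]
      rw [List.idxOf_cons_self, List.idxOf_cons_ne t (Ne.symm hab)]
      rw [if_pos (Nat.succ_pos _)]
      omega
    · rcases eq_or_ne h a with hA | hA
      · subst hA
        rw [List.filter_cons_of_pos (by simp [hab]), List.idxOf_cons_self,
          List.idxOf_cons_self]
        simp
      · have ha' : a ∈ t := by
          rcases List.mem_cons.mp ha with hh | hh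
          · exact absurd hh.symm hA
          · exact hh
        rw [List.filter_cons_of_pos (by simp [hb]),
          List.idxOf_cons_ne _ hA,
          List.idxOf_cons_ne t hA,
          List.idxOf_cons_ne t hb]
        rw [ih hnd' ha']
        have hlt : a ∈ t := ha'
        split_ifs <;> omega


lemma touched_cons (e : MV m n) (W : List (MV m n)) :
    touched m n (e :: W) =
      ((sta m n W).right).symm (pk n e.1) :: touched m n W := rfl

lemma rwd_cons (e : MV m n) (W : List (MV m n)) :
    rwd m n (e :: W) =
      ((sta m n W).right).symm (pk n e.1) ::
        (rwd m n W).filter (fun x => x ≠ ((sta m n W).right).symm (pk n e.1)) := rfl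

lemma mem_rwd_iff (W : List (MV m n)) (c : Fin n) :
    c ∈ rwd m n W ↔ c ∈ touched m n W := mem_dists n _ c

lemma untouched_of_dyn1 (W : List (MV m n))
    (h1 : ∀ c ∈ rwd m n W, (((sta m n W).right) c).val = n - 1 - (rwd m n W).idxOf c)
    (c : Fin n) (hc : c ∉ touched m n W) :
    (((sta m n W).right) c).val < n - (rwd m n W).length := by
  by_contra hcon
  push_neg at hcon
  have hlen : (rwd m n W).length ≤ n := length_dists_le n _
  have hv := ((sta m n W).right c).isLt
  have hi : n - 1 - ((sta m n W).right c).val < (rwd m n W).length := by omega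
  have hd : (rwd m n W)[n - 1 - ((sta m n W).right c).val] ∈ rwd m n W :=
    List.getElem_mem hi
  have hidx : List.idxOf ((rwd m n W)[n - 1 - ((sta m n W).right c).val]'hi) (rwd m n W)
      = n - 1 - ((sta m n W).right c).val :=
    List.Nodup.idxOf_getElem (nodup_dists n (touched m n W)) _ hi
  have hval := h1 _ hd
  rw [hidx] at hval
  have hvv : (((sta m n W).right) ((rwd m n W)[n - 1 - ((sta m n W).right c).val])).val
      = (((sta m n W).right) c).val := by omega
  have hdc := (sta m n W).right.injective (Fin.val_injective hvv)
  rw [hdc] at hd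
  exact hc ((mem_rwd_iff m n W c).mp hd)

theorem dyn (W : List (MV m n)) :
    (∀ c ∈ rwd m n W, (((sta m n W).right) c).val = n - 1 - (rwd m n W).idxOf c) ∧
      (∀ c : Fin n, (sta m n W).left ((sta m n W).right c) = ofAdd (rots m n W c)) := by
  induction W with
  | nil =>
    constructor
    · intro c hc
      simp [rwd, touched, cwd, dists] at hc
    · intro c
      rw [sta_nil]
      have h0 : rots m n [] c = 0 := by simp [rots, crots, cwd]
      rw [h0]
      rfl
  | cons e W ih =>
    obtain ⟨ih1, ih2⟩ := ih
    set σ' := (sta m n W).right with hσ'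
    set c₀ := σ'.symm (pk n e.1) with hc₀
    have hl : e.1.val < n := e.1.isLt
    have hσc₀ : σ' c₀ = pk n e.1 := Equiv.apply_symm_apply _ _
    have hstep : ∀ c : Fin n, ((sta m n (e :: W)).right c).val =
        if (σ' c).val = n - 1 - e.1.val then n - 1
        else if n - 1 - e.1.val < (σ' c).val then (σ' c).val - 1 else (σ' c).val := by
      intro c
      rw [sta_cons_right]
      have : (((cyc m n e.1.val).right)⁻¹ * σ') c = ((cyc m n e.1.val).right)⁻¹ (σ' c) := rfl
      rw [this, cyc_right_inv_apply m n e.1.val hl]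
    constructor
    · -- part 1
      intro c hc
      have hrw : rwd m n (e :: W) = c₀ :: (rwd m n W).filter (fun x => x ≠ c₀) := rfl
      rw [hrw] at hc ⊢
      rw [hstep c]
      have hp : (pk n e.1).val = n - 1 - e.1.val := rfl
      rcases List.mem_cons.mp hc with hcc | hcf
      · subst hcc
        rw [List.idxOf_cons_self, hσc₀, hp, if_pos rfl]
        omega
      · have hcr : c ∈ rwd m n W := (List.mem_filter.mp hcf).1
        have hcne : c ≠ c₀ := by
          have := (List.mem_filter.mp hcf).2
          simpa using this
        have hidxc := ih1 c hcr
        have hlenW : (rwd m n W).length ≤ n := length_dists_le n _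
        have hidxlt : (rwd m n W).idxOf c < (rwd m n W).length :=
          List.idxOf_lt_length_iff.mpr hcr
        rw [List.idxOf_cons_ne _ (Ne.symm hcne)]
        rw [indexOf_filter_ne (rwd m n W) (nodup_dists n _) c c₀ hcr hcne]
        by_cases hc₀r : c₀ ∈ rwd m n W
        · have hidx₀ := ih1 c₀ hc₀r
          rw [hσc₀, hp] at hidx₀
          have hidxlt₀ : (rwd m n W).idxOf c₀ < (rwd m n W).length :=
            List.idxOf_lt_length_iff.mpr hc₀r
          have hne' : (rwd m n W).idxOf c ≠ (rwd m n W).idxOf c₀ := by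
            intro hcon
            exact hcne ((List.idxOf_inj hcr).mp hcon)
          split_ifs <;> omega
        · have hc₀t : c₀ ∉ touched m n W := fun hh => hc₀r ((mem_rwd_iff m n W c₀).mpr hh)
          have hlow := untouched_of_dyn1 m n W ih1 c₀ hc₀t
          rw [hσc₀, hp] at hlow
          have hidx₀len : (rwd m n W).idxOf c₀ = (rwd m n W).length :=
            List.idxOf_eq_length_iff.mpr hc₀r
          split_ifs <;> omega
    · -- part 2
      intro c
      have hq : (sta m n (e :: W)).right c = ((cyc m n e.1.val).right)⁻¹ (σ' c) := by
        rw [sta_cons_right]; rfl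
      rw [hq, sta_cons_left]
      have hRL : (cyc m n e.1.val).right (((cyc m n e.1.val).right)⁻¹ (σ' c)) = σ' c :=
        Equiv.Perm.apply_inv_self _ _
      rw [hRL, ih2 c]
      have hcond : (((cyc m n e.1.val).right)⁻¹ (σ' c) = top n) ↔ (c = c₀) := by
        constructor
        · intro h
          have : σ' c = (cyc m n e.1.val).right (top n) := by
            rw [← h, Equiv.Perm.apply_inv_self]
          rw [cyc_right_top] at this
          rw [hc₀, ← this, Equiv.symm_apply_apply]
        · intro h
          rw [h, hσc₀, ← cyc_right_top m n e.1]
          exact Equiv.Perm.inv_apply_self _ _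
      have hrots : rots m n (e :: W) c = (if c = c₀ then -e.2 else 0) + rots m n W c := by
        unfold rots
        have : cwd m n (e :: W) = (c₀, e.2) :: cwd m n W := rfl
        rw [this, crots_cons]
        congr 1
        by_cases h : c = c₀
        · rw [if_pos h, if_pos h.symm]
        · rw [if_neg h, if_neg (fun hh => h hh.symm)]
      rw [hrots]
      by_cases h : c = c₀
      · rw [if_pos (hcond.mpr h), if_pos h, ofAdd_add]
      · rw [if_neg (fun hh => h (hcond.mp hh)), if_neg h, zero_add, one_mul]


/-! ### decode: cardwords to words -/

def dec : List (MV m n) → List (MV m n)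
  | [] => []
  | (c, r) :: cw =>
    (⟨n - 1 - ((sta m n (dec cw)).right c).val, by have := npos n; omega⟩, r) :: dec cw

lemma pk_mk (q : Fin n) :
    pk n (⟨n - 1 - q.val, by have := npos n; omega⟩ : Fin n) = q := by
  apply Fin.val_injective
  have hq := q.isLt
  show n - 1 - (n - 1 - q.val) = q.val
  omega

lemma cwd_dec (cw : List (MV m n)) : cwd m n (dec m n cw) = cw := by
  induction cw with
  | nil => rfl
  | cons e cw ih =>
    obtain ⟨c, r⟩ := e
    show (((sta m n (dec m n cw)).right).symm
        (pk n ⟨n - 1 - ((sta m n (dec m n cw)).right c).val, _⟩), r) :: cwd m n (dec m n cw)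
      = (c, r) :: cw
    rw [ih, pk_mk, Equiv.symm_apply_apply]

lemma dec_cwd (W : List (MV m n)) : dec m n (cwd m n W) = W := by
  induction W with
  | nil => rfl
  | cons e W ih =>
    obtain ⟨l, r⟩ := e
    show (⟨n - 1 - ((sta m n (dec m n (cwd m n W))).right
        (((sta m n W).right).symm (pk n l))).val, _⟩, r) :: dec m n (cwd m n W) = (l, r) :: W
    have hv : ((sta m n (dec m n (cwd m n W))).right
        (((sta m n W).right).symm (pk n l))) = pk n l := by
      rw [ih, Equiv.apply_symm_apply]
    congr 1
    · apply Prod.ext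
      · apply Fin.val_injective
        show n - 1 - ((sta m n (dec m n (cwd m n W))).right
          (((sta m n W).right).symm (pk n l))).val = l.val
        rw [hv]
        have hl := l.isLt
        show n - 1 - (n - 1 - l.val) = l.val
        omega
      · rfl

lemma length_cwd (W : List (MV m n)) : (cwd m n W).length = W.length := by
  induction W with
  | nil => rfl
  | cons e W ih => simp [cwd, ih]

lemma length_dec (cw : List (MV m n)) : (dec m n cw).length = cw.length := by
  induction cw with
  | nil => rfl
  | cons e cw ih =>
    obtain ⟨c, r⟩ := e
    simp [dec, ih]

/-! ### the relabeling transformation on cardwords -/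

def TR (τ : Equiv.Perm (Fin n)) (Δ : Fin n → ZMod m) :
    List (Fin n) → List (MV m n) → List (MV m n)
  | _, [] => []
  | s, (c, r) :: cw => (τ c, r - (if c ∈ s then 0 else Δ c)) :: TR τ Δ (c :: s) cw

lemma TR_fst (τ : Equiv.Perm (Fin n)) (Δ : Fin n → ZMod m) :
    ∀ (cw : List (MV m n)) (s : List (Fin n)),
      (TR m n τ Δ s cw).map Prod.fst = (cw.map Prod.fst).map τ := by
  intro cw
  induction cw with
  | nil => intro s; rfl
  | cons e cw ih =>
    intro s
    obtain ⟨c, r⟩ := e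
    show τ c :: (TR m n τ Δ (c :: s) cw).map Prod.fst = τ c :: (cw.map Prod.fst).map τ
    rw [ih]

lemma TR_length (τ : Equiv.Perm (Fin n)) (Δ : Fin n → ZMod m) :
    ∀ (cw : List (MV m n)) (s : List (Fin n)), (TR m n τ Δ s cw).length = cw.length := by
  intro cw
  induction cw with
  | nil => intro s; rfl
  | cons e cw ih =>
    intro s
    obtain ⟨c, r⟩ := e
    show (TR m n τ Δ (c :: s) cw).length + 1 = cw.length + 1
    rw [ih]

lemma TR_TR (τ : Equiv.Perm (Fin n)) (Δ : Fin n → ZMod m) :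
    ∀ (cw : List (MV m n)) (s : List (Fin n)),
      TR m n τ⁻¹ (fun d => -Δ (τ⁻¹ d)) (s.map τ) (TR m n τ Δ s cw) = cw := by
  intro cw
  induction cw with
  | nil => intro s; rfl
  | cons e cw ih =>
    intro s
    obtain ⟨c, r⟩ := e
    show (τ⁻¹ (τ c), (r - (if c ∈ s then 0 else Δ c)) -
        (if τ c ∈ s.map τ then 0 else -Δ (τ⁻¹ (τ c)))) ::
        TR m n τ⁻¹ (fun d => -Δ (τ⁻¹ d)) ((τ c) :: s.map τ) (TR m n τ Δ (c :: s) cw)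
      = (c, r) :: cw
    have h1 : τ⁻¹ (τ c) = c := Equiv.Perm.inv_apply_self _ _
    have h2 : (τ c ∈ s.map τ) ↔ (c ∈ s) := by
      constructor
      · intro h
        rcases List.mem_map.mp h with ⟨d, hd, hdc⟩
        rwa [← τ.injective hdc]
      · intro h
        exact List.mem_map_of_mem (f := τ) h
    have h3 : ((τ c) :: s.map τ) = (c :: s).map τ := rfl
    rw [h1, h3, ih]
    congr 1
    by_cases h : c ∈ s
    · rw [if_pos h, if_pos (h2.mpr h)]
      ring
    · rw [if_neg h, if_neg (fun hc => h (h2.mp hc))]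
      ring

lemma TR_crots (τ : Equiv.Perm (Fin n)) (Δ : Fin n → ZMod m) :
    ∀ (cw : List (MV m n)) (s : List (Fin n)) (c : Fin n),
      crots m n (TR m n τ Δ s cw) (τ c) =
        crots m n cw c +
          (if c ∈ s then 0 else if c ∈ cw.map Prod.fst then Δ c else 0) := by
  intro cw
  induction cw with
  | nil =>
    intro s c
    simp [TR, crots]
  | cons e cw ih =>
    intro s c
    obtain ⟨c₁, r₁⟩ := e
    have hTR : TR m n τ Δ s ((c₁, r₁) :: cw) =
        (τ c₁, r₁ - (if c₁ ∈ s then 0 else Δ c₁)) :: TR m n τ Δ (c₁ :: s) cw := rfl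
    rw [hTR, crots_cons, crots_cons, ih _ c]
    rcases eq_or_ne c₁ c with hce | hce
    · subst hce
      rw [if_pos rfl, if_pos rfl]
      have hmem : c₁ ∈ ((c₁, r₁) :: cw).map Prod.fst := by simp
      rw [if_pos hmem]
      have : (c₁ ∈ c₁ :: s) := List.mem_cons_self
      rw [if_pos this]
      by_cases h : c₁ ∈ s
      · rw [if_pos h]
        ring
      · rw [if_neg h]
        ring
    · have hτ : τ c₁ ≠ τ c := fun hc => hce (τ.injective hc)
      rw [if_neg hτ, if_neg hce]
      have h2 : (c ∈ c₁ :: s) ↔ (c ∈ s) := by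
        constructor
        · intro h
          rcases List.mem_cons.mp h with h | h
          · exact absurd h.symm hce
          · exact h
        · intro h; exact List.mem_cons_of_mem _ h
      have h3 : (c ∈ ((c₁, r₁) :: cw).map Prod.fst) ↔ (c ∈ cw.map Prod.fst) := by
        simp only [List.map_cons, List.mem_cons]
        constructor
        · rintro (h | h)
          · exact absurd h.symm hce
          · exact h
        · intro h; exact Or.inr h
      rw [zero_add, zero_add]
      congr 1
      by_cases h : c ∈ s
      · rw [if_pos h, if_pos (h2.mpr h)]
      · rw [if_neg h, if_neg (fun hc => h (h2.mp hc))]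
        by_cases hm : c ∈ cw.map Prod.fst
        · rw [if_pos hm, if_pos (h3.mpr hm)]
        · rw [if_neg hm, if_neg (fun hc => hm (h3.mp hc))]


/-! ### map lemmas for dists and indexOf -/

lemma filter_ne_map (τ : Equiv.Perm (Fin n)) (a : Fin n) (X : List (Fin n)) :
    (X.map τ).filter (fun x => x ≠ τ a) = (X.filter (fun x => x ≠ a)).map τ := by
  induction X with
  | nil => rfl
  | cons b X ih =>
    rcases eq_or_ne b a with hb | hb
    · subst hb
      rw [List.map_cons, List.filter_cons_of_neg (by simp),
        List.filter_cons_of_neg (by simp), ih]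
    · rw [List.map_cons,
        List.filter_cons_of_pos (by simpa using fun hc => hb (τ.injective hc)),
        List.filter_cons_of_pos (by simpa using hb), List.map_cons, ih]

lemma dists_map (τ : Equiv.Perm (Fin n)) (L : List (Fin n)) :
    dists n (L.map τ) = (dists n L).map τ := by
  induction L with
  | nil => rfl
  | cons a L ih =>
    show τ a :: (dists n (L.map τ)).filter (fun x => x ≠ τ a)
      = τ a :: ((dists n L).filter (fun x => x ≠ a)).map τ
    rw [ih, filter_ne_map]

lemma indexOf_map (τ : Equiv.Perm (Fin n)) (L : List (Fin n)) (c : Fin n) :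
    (L.map τ).idxOf (τ c) = L.idxOf c := by
  induction L with
  | nil => rfl
  | cons a L ih =>
    rcases eq_or_ne a c with ha | ha
    · subst ha
      rw [List.map_cons, List.idxOf_cons_self, List.idxOf_cons_self]
    · rw [List.map_cons, List.idxOf_cons_ne _ (fun hc => ha (τ.injective hc)),
        List.idxOf_cons_ne _ ha, ih]

/-! ### the class bijection -/

abbrev cpl (W : List (MV m n)) : Prop := ∀ c : Fin n, c ∈ touched m n W

def tXY (x y : GG m n) : Equiv.Perm (Fin n) := y.right⁻¹ * x.right

def dXY (x y : GG m n) (d : Fin n) : ZMod m :=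
  toAdd (y.left (x.right d)) - toAdd (x.left (x.right d))

def FXY (x y : GG m n) (W : List (MV m n)) : List (MV m n) :=
  dec m n (TR m n (tXY m n x y) (dXY m n x y) [] (cwd m n W))

lemma tXY_apply_right (x y : GG m n) (d : Fin n) :
    y.right (tXY m n x y d) = x.right d := by
  unfold tXY
  show y.right (y.right⁻¹ (x.right d)) = x.right d
  exact Equiv.Perm.apply_inv_self _ _

lemma FXY_length (x y : GG m n) (W : List (MV m n)) : (FXY m n x y W).length = W.length := by
  unfold FXY
  rw [length_dec, TR_length, length_cwd]

lemma FXY_spec (x y : GG m n) (W : List (MV m n)) (hc : cpl m n W) (hs : sta m n W = x) :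
    cpl m n (FXY m n x y W) ∧ sta m n (FXY m n x y W) = y := by
  set τ := tXY m n x y with hτ
  have hcw : cwd m n (FXY m n x y W) = TR m n τ (dXY m n x y) [] (cwd m n W) :=
    cwd_dec m n _
  have htch : touched m n (FXY m n x y W) = (touched m n W).map τ := by
    unfold touched
    rw [hcw, TR_fst]
  have hc' : cpl m n (FXY m n x y W) := by
    intro d
    rw [htch]
    refine List.mem_map.mpr ⟨τ⁻¹ d, hc _, ?_⟩
    exact Equiv.Perm.apply_inv_self _ _
  have hr : rwd m n (FXY m n x y W) = (rwd m n W).map τ := by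
    unfold rwd
    rw [htch, dists_map]
  obtain ⟨d1, d2⟩ := dyn m n (FXY m n x y W)
  obtain ⟨e1, e2⟩ := dyn m n W
  have hσ : ∀ d : Fin n, (sta m n (FXY m n x y W)).right (τ d) = x.right d := by
    intro d
    have hd : τ d ∈ rwd m n (FXY m n x y W) := (mem_rwd_iff m n _ _).mpr (hc' (τ d))
    have h1 := d1 (τ d) hd
    rw [hr, indexOf_map] at h1
    have h2 := e1 d ((mem_rwd_iff m n _ _).mpr (hc d))
    rw [hs] at h2
    exact Fin.val_injective (h1.trans h2.symm)
  have hσfull : (sta m n (FXY m n x y W)).right = y.right := by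
    apply Equiv.ext
    intro q
    have h1 := hσ (τ⁻¹ q)
    rw [Equiv.Perm.apply_inv_self] at h1
    rw [h1]
    have : τ⁻¹ q = x.right⁻¹ (y.right q) := by
      rw [hτ]
      unfold tXY
      rw [mul_inv_rev, inv_inv]
      rfl
    rw [this]
    exact Equiv.Perm.apply_inv_self _ _
  have hf : ∀ d : Fin n, (sta m n (FXY m n x y W)).left (x.right d) = y.left (x.right d) := by
    intro d
    have h2 := d2 (τ d)
    rw [hσ d] at h2
    rw [h2]
    have hrots : rots m n (FXY m n x y W) (τ d) = rots m n W d + dXY m n x y d := by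
      unfold rots
      rw [hcw]
      have := TR_crots m n τ (dXY m n x y) (cwd m n W) [] d
      rw [this]
      have hmem : d ∈ (cwd m n W).map Prod.fst := hc d
      simp [hmem]
    rw [hrots]
    have he2 := e2 d
    rw [hs] at he2
    have hval : rots m n W d = toAdd (x.left (x.right d)) := by
      rw [he2]
      rfl
    rw [hval]
    unfold dXY
    rw [show toAdd (x.left (x.right d)) + (toAdd (y.left (x.right d)) - toAdd (x.left (x.right d)))
        = toAdd (y.left (x.right d)) by ring]
    rfl
  have hffull : (sta m n (FXY m n x y W)).left = y.left := by
    funext q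
    have h1 := hf (x.right⁻¹ q)
    rwa [Equiv.Perm.apply_inv_self] at h1
  exact ⟨hc', SemidirectProduct.ext hffull hσfull⟩

lemma FXY_inv (x y : GG m n) (W : List (MV m n)) :
    FXY m n y x (FXY m n x y W) = W := by
  unfold FXY
  rw [cwd_dec]
  have hτ : tXY m n y x = (tXY m n x y)⁻¹ := by
    unfold tXY
    rw [mul_inv_rev, inv_inv]
  have hΔ : dXY m n y x = fun d => -(dXY m n x y ((tXY m n x y)⁻¹ d)) := by
    funext d
    unfold dXY
    have hx : x.right ((tXY m n x y)⁻¹ d) = y.right d := by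
      unfold tXY
      rw [mul_inv_rev, inv_inv]
      show x.right (x.right⁻¹ (y.right d)) = y.right d
      exact Equiv.Perm.apply_inv_self _ _
    rw [hx]
    ring
  rw [hτ, hΔ]
  have h := TR_TR m n (tXY m n x y) (dXY m n x y) (cwd m n W) []
  rw [show (List.map (⇑(tXY m n x y)) ([] : List (Fin n))) = ([] : List (Fin n)) from rfl] at h
  rw [h, dec_cwd]


/-! ### counting -/

def Wset : ℕ → Finset (List (MV m n))
  | 0 => {[]}
  | k+1 => Finset.univ.biUnion (fun e : MV m n => (Wset k).image (fun W => e :: W))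

lemma mem_Wset (k : ℕ) (W : List (MV m n)) : W ∈ Wset m n k ↔ W.length = k := by
  induction k generalizing W with
  | zero =>
    show W ∈ ({[]} : Finset (List (MV m n))) ↔ _
    simp [List.length_eq_zero_iff]
  | succ k ih =>
    show W ∈ Finset.univ.biUnion (fun e : MV m n => (Wset m n k).image (fun W => e :: W)) ↔ _
    simp only [Finset.mem_biUnion, Finset.mem_image, Finset.mem_univ, true_and]
    constructor
    · rintro ⟨e, W', hW', rfl⟩
      simp [ih W' |>.mp hW']
    · intro hW
      cases W with
      | nil => simp at hW
      | cons e W' =>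
        exact ⟨e, W', (ih W').mpr (by simpa using hW), rfl⟩

lemma card_MV : Fintype.card (MV m n) = n * m := by
  rw [Fintype.card_prod, Fintype.card_fin]
  congr 1
  exact ZMod.card m

lemma card_filter_Wset_succ (k : ℕ) (p : List (MV m n) → Prop) [DecidablePred p] :
    ((Wset m n (k+1)).filter p).card
      = ∑ e : MV m n, ((Wset m n k).filter (fun W => p (e :: W))).card := by
  show ((Finset.univ.biUnion
      (fun e : MV m n => (Wset m n k).image (fun W => e :: W))).filter p).card = _
  rw [Finset.filter_biUnion]
  rw [Finset.card_biUnion]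
  · apply Finset.sum_congr rfl
    intro e _
    have himg : ((Wset m n k).image (fun W => e :: W)).filter p
        = ((Wset m n k).filter (fun W => p (e :: W))).image (fun W => e :: W) := by
      ext W
      simp only [Finset.mem_filter, Finset.mem_image]
      constructor
      · rintro ⟨⟨W', hW', rfl⟩, hp⟩
        exact ⟨W', ⟨hW', hp⟩, rfl⟩
      · rintro ⟨W', ⟨hW', hp⟩, rfl⟩
        exact ⟨⟨W', hW', rfl⟩, hp⟩
    rw [himg, Finset.card_image_of_injective _ (fun a b hab => by
      injection hab)]
  · intro e1 _ e2 _ hne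
    rw [Function.onFun, Finset.disjoint_left]
    intro W hW1 hW2
    simp only [Finset.mem_filter, Finset.mem_image] at hW1 hW2
    obtain ⟨⟨W1, _, rfl⟩, _⟩ := hW1
    obtain ⟨⟨W2, _, heq⟩, _⟩ := hW2
    exact hne (by injection heq with h1 h2; exact h1.symm)

lemma card_Wset (k : ℕ) : (Wset m n k).card = (n * m) ^ k := by
  induction k with
  | zero => rfl
  | succ k ih =>
    have h := card_filter_Wset_succ m n k (fun _ => True)
    simp only [Finset.filter_true] at h
    rw [h]
    rw [Finset.sum_const, ih, smul_eq_mul, Finset.card_univ, card_MV]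
    ring

/-! ### class cardinalities are equal -/

lemma Acls_card_eq (k : ℕ) (x y : GG m n) :
    ((Wset m n k).filter (fun W => sta m n W = x ∧ cpl m n W)).card
      = ((Wset m n k).filter (fun W => sta m n W = y ∧ cpl m n W)).card := by
  apply Finset.card_bij' (fun W _ => FXY m n x y W) (fun W _ => FXY m n y x W)
  · intro W hW
    simp only [Finset.mem_filter] at hW ⊢
    obtain ⟨hWk, hsx, hcp⟩ := hW
    obtain ⟨hc', hs'⟩ := FXY_spec m n x y W hcp hsx
    exact ⟨(mem_Wset m n k _).mpr (by rw [FXY_length, (mem_Wset m n k W).mp hWk]),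
      hs', hc'⟩
  · intro W hW
    simp only [Finset.mem_filter] at hW ⊢
    obtain ⟨hWk, hsy, hcp⟩ := hW
    obtain ⟨hc', hs'⟩ := FXY_spec m n y x W hcp hsy
    exact ⟨(mem_Wset m n k _).mpr (by rw [FXY_length, (mem_Wset m n k W).mp hWk]),
      hs', hc'⟩
  · intro W _
    exact FXY_inv m n x y W
  · intro W _
    exact FXY_inv m n y x W

/-! ### incomplete word bound -/

lemma card_avoid_cw (k : ℕ) (c : Fin n) :
    ((Wset m n k).filter (fun cw => c ∉ cw.map Prod.fst)).card = ((n-1) * m) ^ k := by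
  induction k with
  | zero =>
    show (({[]} : Finset (List (MV m n))).filter _).card = 1
    rw [Finset.filter_singleton, if_pos (by simp)]
    rfl
  | succ k ih =>
    rw [card_filter_Wset_succ]
    have hsplit : ∀ e : MV m n,
        ((Wset m n k).filter (fun W => c ∉ (e :: W).map Prod.fst)).card
          = if e.1 = c then 0 else ((n-1) * m) ^ k := by
      intro e
      by_cases he : e.1 = c
      · rw [if_pos he, Finset.card_eq_zero]
        apply Finset.filter_false_of_mem
        intro W _
        simp [he]
      · rw [if_neg he, ← ih]
        apply congrArg
        apply Finset.filter_congr
        intro W _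
        show (c ∉ (e :: W).map Prod.fst) ↔ (c ∉ W.map Prod.fst)
        simp only [List.map_cons, List.mem_cons]
        constructor
        · intro hh hc
          exact hh (Or.inr hc)
        · intro hh hc
          rcases hc with h1 | h2
          · exact he h1.symm
          · exact hh h2
    rw [Finset.sum_congr rfl (fun e _ => hsplit e)]
    rw [Finset.sum_ite, Finset.sum_const, Finset.sum_const, smul_zero, zero_add,
      smul_eq_mul]
    have hcard : (Finset.univ.filter (fun e : MV m n => ¬ e.1 = c)).card = (n-1) * m := by
      have h1 : (Finset.univ.filter (fun e : MV m n => e.1 = c)).card = m := by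
        have : (Finset.univ.filter (fun e : MV m n => e.1 = c))
            = Finset.univ.map ⟨fun r : ZMod m => (c, r), fun a b hab => by
                injection hab⟩ := by
          ext e
          simp only [Finset.mem_filter, Finset.mem_univ, true_and, Finset.mem_map,
            Function.Embedding.coeFn_mk]
          constructor
          · intro h
            exact ⟨e.2, by rw [← h]; rfl⟩
          · rintro ⟨r, rfl⟩
            rfl
        rw [this, Finset.card_map, Finset.card_univ, ZMod.card]
      have h2 := Finset.card_filter_add_card_filter_not
        (s := (Finset.univ : Finset (MV m n))) (p := fun e => e.1 = c)
      rw [Finset.card_univ, card_MV, h1] at h2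
      have hn1 := npos n
      have hmul : (n-1) * m = n*m - m := by rw [Nat.sub_mul, one_mul]
      have hle : m ≤ n * m := Nat.le_mul_of_pos_left m hn1
      omega
    rw [hcard]
    ring

lemma card_avoid (k : ℕ) (c : Fin n) :
    ((Wset m n k).filter (fun W => c ∉ touched m n W)).card = ((n-1) * m) ^ k := by
  rw [← card_avoid_cw m n k c]
  apply Finset.card_bij' (fun W _ => cwd m n W) (fun cw _ => dec m n cw)
  · intro W hW
    simp only [Finset.mem_filter] at hW ⊢
    exact ⟨(mem_Wset m n k _).mpr (by rw [length_cwd, (mem_Wset m n k W).mp hW.1]), hW.2⟩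
  · intro cw hcw
    simp only [Finset.mem_filter] at hcw ⊢
    refine ⟨(mem_Wset m n k _).mpr (by rw [length_dec, (mem_Wset m n k cw).mp hcw.1]), ?_⟩
    show c ∉ touched m n (dec m n cw)
    unfold touched
    rw [cwd_dec]
    exact hcw.2
  · intro W _
    exact dec_cwd m n W
  · intro cw _
    exact cwd_dec m n cw

lemma card_incomplete_le (k : ℕ) :
    ((Wset m n k).filter (fun W => ¬ cpl m n W)).card ≤ n * ((n-1) * m) ^ k := by
  have hsub : (Wset m n k).filter (fun W => ¬ cpl m n W) ⊆
      Finset.univ.biUnion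
        (fun c : Fin n => (Wset m n k).filter (fun W => c ∉ touched m n W)) := by
    intro W hW
    simp only [Finset.mem_filter] at hW
    obtain ⟨hWk, hnc⟩ := hW
    rw [Finset.mem_biUnion]
    obtain ⟨c, hc⟩ := not_forall.mp hnc
    exact ⟨c, Finset.mem_univ c, Finset.mem_filter.mpr ⟨hWk, hc⟩⟩
  calc ((Wset m n k).filter (fun W => ¬ cpl m n W)).card
      ≤ _ := Finset.card_le_card hsub
    _ ≤ ∑ c : Fin n, ((Wset m n k).filter (fun W => c ∉ touched m n W)).card :=
        Finset.card_biUnion_le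
    _ = ∑ _c : Fin n, ((n-1) * m) ^ k :=
        Finset.sum_congr rfl (fun c _ => card_avoid m n k c)
    _ = n * ((n-1) * m) ^ k := by
        rw [Finset.sum_const, Finset.card_univ, Fintype.card_fin, smul_eq_mul]


/-! ### bridge: P^k entries are word counts -/

lemma tGen_pow (a : ℕ) :
    tGen m n (n-1) ^ a
      = SemidirectProduct.inl (Pi.mulSingle (top n) (ofAdd ((a : ZMod m)))) := by
  have ht : tGen m n (n-1) = SemidirectProduct.inl
      (Pi.mulSingle (top n) (ofAdd (1 : ZMod m))) := by
    unfold tGen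
    rw [dif_pos (show n - 1 < n by have := npos n; omega)]
    rfl
  rw [ht, ← map_pow]
  congr 1
  rw [← Pi.mulSingle_pow]
  congr 1
  rw [← ofAdd_nsmul]
  congr 1
  rw [nsmul_eq_mul, mul_one]

lemma mshaR_eq : mshaR m n = ∑ e : MV m n, MonoidAlgebra.single (grp m n e) 1 := by
  unfold mshaR
  rw [Finset.sum_mul_sum]
  have hterm : ∀ l a : ℕ,
      (MonoidAlgebra.of ℝ (GG m n))
          (((List.range l).map (fun p => sGen m n (n - 1 - l + p))).prod)
        * (MonoidAlgebra.of ℝ (GG m n)) (tGen m n (n-1) ^ a)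
      = MonoidAlgebra.single
          (cyc m n l * SemidirectProduct.inl (Pi.mulSingle (top n) (ofAdd ((a : ZMod m)))))
          (1:ℝ) := by
    intro l a
    rw [← map_mul, tGen_pow, MonoidAlgebra.of_apply]
    rfl
  rw [Finset.sum_congr rfl (fun l _ => Finset.sum_congr rfl (fun a _ => hterm l a))]
  rw [Fintype.sum_prod_type]
  apply Finset.sum_bij
    (i := fun (l : ℕ) (hl : l ∈ Finset.range n) => (⟨l, Finset.mem_range.mp hl⟩ : Fin n))
  · intro l hl
    exact Finset.mem_univ _
  · intro l1 h1 l2 h2 heq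
    exact congrArg Fin.val heq
  · intro x _
    exact ⟨x.val, Finset.mem_range.mpr x.isLt, Fin.ext rfl⟩
  · intro l hl
    apply Finset.sum_nbij' (i := fun a : ℕ => ((a : ZMod m)))
      (j := fun r : ZMod m => r.val)
    · intro a _
      exact Finset.mem_univ _
    · intro r _
      exact Finset.mem_range.mpr (ZMod.val_lt r)
    · intro a ha
      exact ZMod.val_cast_of_lt (Finset.mem_range.mp ha)
    · intro r _
      exact ZMod.natCast_rightInverse r
    · intro a _
      rfl

lemma mshaR_apply (z : GG m n) :
    (mshaR m n).coeff z = ∑ e : MV m n, (if grp m n e = z then (1:ℝ) else 0) := by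
  rw [mshaR_eq, MonoidAlgebra.coeff_sum]
  rw [Finsupp.finset_sum_apply]
  apply Finset.sum_congr rfl
  intro e _
  exact MonoidAlgebra.coeff_single_apply

lemma P_pow (k : ℕ) (g h : GG m n) :
    (P m n ^ k) g h = (((m : ℝ) * n) ^ k)⁻¹ *
      (((Wset m n k).filter (fun W => gprod m n W = g * h⁻¹)).card : ℝ) := by
  induction k generalizing g h with
  | zero =>
    rw [pow_zero, pow_zero, inv_one, one_mul, Matrix.one_apply]
    show _ = (((({[]} : Finset (List (MV m n)))).filter
      (fun W => gprod m n W = g * h⁻¹)).card : ℝ)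
    rw [Finset.filter_singleton]
    have hiff : (gprod m n ([] : List (MV m n)) = g * h⁻¹) ↔ g = h := by
      show (1 = g * h⁻¹) ↔ g = h
      rw [eq_comm, mul_inv_eq_one]
    rcases eq_or_ne g h with he | he
    · rw [if_pos he, if_pos (hiff.mpr he)]
      simp
    · rw [if_neg he, if_neg (fun hc => he (hiff.mp hc))]
      simp
  | succ k ih =>
    rw [pow_succ, Matrix.mul_apply]
    have hP : ∀ y, P m n y h
        = ((m:ℝ)*n)⁻¹ * ∑ e : MV m n, (if grp m n e = y * h⁻¹ then (1:ℝ) else 0) := by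
      intro y
      show ((m * n : ℝ))⁻¹ * (mshaR m n).coeff (y * h⁻¹) = _
      rw [mshaR_apply]
    have hstep1 : ∀ y : GG m n, (P m n ^ k) g y * P m n y h
        = ∑ e : MV m n, (if y = grp m n e * h then
            ((((m : ℝ) * n) ^ k)⁻¹ *
              (((Wset m n k).filter (fun W => gprod m n W = g * y⁻¹)).card : ℝ))
              * ((m:ℝ)*n)⁻¹ else 0) := by
      intro y
      rw [ih, hP, Finset.mul_sum, Finset.mul_sum]
      apply Finset.sum_congr rfl
      intro e _
      have hcond : (grp m n e = y * h⁻¹) ↔ (y = grp m n e * h) := by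
        constructor
        · intro hh
          rw [hh]
          group
        · intro hh
          rw [hh]
          group
      rcases eq_or_ne y (grp m n e * h) with hy | hy
      · rw [if_pos (hcond.mpr hy), if_pos hy]
        ring
      · rw [if_neg (fun hc => hy (hcond.mp hc)), if_neg hy]
        ring
    rw [Finset.sum_congr rfl (fun y _ => hstep1 y)]
    rw [Finset.sum_comm]
    have hstep2 : ∀ e : MV m n, (∑ y : GG m n, if y = grp m n e * h then
        ((((m : ℝ) * n) ^ k)⁻¹ *
          (((Wset m n k).filter (fun W => gprod m n W = g * y⁻¹)).card : ℝ))
          * ((m:ℝ)*n)⁻¹ else 0)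
        = (((m : ℝ) * n) ^ (k+1))⁻¹ *
            (((Wset m n k).filter
              (fun W => gprod m n W = g * h⁻¹ * (grp m n e)⁻¹)).card : ℝ) := by
      intro e
      rw [Finset.sum_ite_eq' Finset.univ (grp m n e * h)]
      rw [if_pos (Finset.mem_univ _)]
      have : g * (grp m n e * h)⁻¹ = g * h⁻¹ * (grp m n e)⁻¹ := by
        group
      rw [this, pow_succ, mul_inv]
      ring
    rw [Finset.sum_congr rfl (fun e _ => hstep2 e)]
    rw [← Finset.mul_sum]
    congr 1
    have hcount : (((Wset m n (k+1)).filter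
        (fun W => gprod m n W = g * h⁻¹)).card : ℝ)
        = ∑ e : MV m n, (((Wset m n k).filter
            (fun W => gprod m n W = g * h⁻¹ * (grp m n e)⁻¹)).card : ℝ) := by
      rw [← Nat.cast_sum]
      congr 1
      rw [card_filter_Wset_succ]
      apply Finset.sum_congr rfl
      intro e _
      congr 1
      apply Finset.filter_congr
      intro W _
      show (gprod m n W * grp m n e = g * h⁻¹) ↔ (gprod m n W = g * h⁻¹ * (grp m n e)⁻¹)
      constructor
      · intro hh
        rw [← hh]
        group
      · intro hh
        rw [hh]
        group
    rw [hcount]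

/-! ### size of the group -/

lemma card_GG : Fintype.card (GG m n) = m ^ n * n.factorial := by
  rw [Fintype.card_congr (ggEquiv m n), Fintype.card_prod, Fintype.card_perm,
    Fintype.card_fun, Fintype.card_fin]
  congr 2
  rw [Fintype.card_multiplicative, ZMod.card]


/-! ### final assembly -/

lemma sum_split (k : ℕ) (x : GG m n) :
    ((Wset m n k).filter (fun W => sta m n W = x)).card
      = ((Wset m n k).filter (fun W => sta m n W = x ∧ cpl m n W)).card
        + ((Wset m n k).filter (fun W => sta m n W = x ∧ ¬ cpl m n W)).card := by
  rw [← Finset.filter_filter, ← Finset.filter_filter]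
  exact (Finset.card_filter_add_card_filter_not (p := cpl m n)).symm

lemma total_eq (k : ℕ) (x : GG m n) :
    (n*m)^k = Fintype.card (GG m n)
        * ((Wset m n k).filter (fun W => sta m n W = x ∧ cpl m n W)).card
      + ((Wset m n k).filter (fun W => ¬ cpl m n W)).card := by
  have h1 : (Wset m n k).card
      = ∑ y : GG m n, ((Wset m n k).filter (fun W => sta m n W = y)).card :=
    Finset.card_eq_sum_card_fiberwise (fun W _ => Finset.mem_univ _)
  rw [card_Wset] at h1
  rw [Finset.sum_congr rfl (fun y _ => sum_split m n k y)] at h1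
  rw [Finset.sum_add_distrib] at h1
  have h2 : ∑ y : GG m n,
      ((Wset m n k).filter (fun W => sta m n W = y ∧ cpl m n W)).card
      = Fintype.card (GG m n)
        * ((Wset m n k).filter (fun W => sta m n W = x ∧ cpl m n W)).card := by
    rw [Finset.sum_congr rfl (fun y _ => Acls_card_eq m n k y x)]
    rw [Finset.sum_const, Finset.card_univ, smul_eq_mul]
  have h3 : ∑ y : GG m n,
      ((Wset m n k).filter (fun W => sta m n W = y ∧ ¬ cpl m n W)).card
      = ((Wset m n k).filter (fun W => ¬ cpl m n W)).card := by
    have h4 : ((Wset m n k).filter (fun W => ¬ cpl m n W)).card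
        = ∑ y : GG m n, (((Wset m n k).filter (fun W => ¬ cpl m n W)).filter
            (fun W => sta m n W = y)).card :=
      Finset.card_eq_sum_card_fiberwise (fun W _ => Finset.mem_univ _)
    rw [h4]
    apply Finset.sum_congr rfl
    intro y _
    rw [Finset.filter_filter]
    apply congrArg
    apply Finset.filter_congr
    intro W _
    constructor
    · intro hh
      exact ⟨hh.2, hh.1⟩
    · intro hh
      exact ⟨hh.2, hh.1⟩
  rw [h2, h3] at h1
  exact h1

lemma main_est (k : ℕ) (g h : GG m n) :
    |(P m n ^ k) g h - 1 / (Fintype.card (GG m n) : ℝ)|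
      ≤ (n : ℝ) * (((n-1) * m : ℕ) : ℝ)^k / (((m:ℝ) * n) ^ k) := by
  have hm1 : 1 ≤ m := Nat.pos_of_ne_zero (NeZero.ne m)
  have hn1 : 1 ≤ n := npos n
  set x := (g * h⁻¹)⁻¹ with hx
  set A := ((Wset m n k).filter (fun W => sta m n W = x ∧ cpl m n W)).card with hA
  set B := ((Wset m n k).filter (fun W => sta m n W = x ∧ ¬ cpl m n W)).card with hB
  set Bt := ((Wset m n k).filter (fun W => ¬ cpl m n W)).card with hBt
  set NG := Fintype.card (GG m n) with hNG
  -- the matrix entry in terms of A and B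
  have hPk : (P m n ^ k) g h = (((m:ℝ)*n)^k)⁻¹ * ((A + B : ℕ) : ℝ) := by
    rw [P_pow]
    congr 2
    have hfe : (Wset m n k).filter (fun W => gprod m n W = g * h⁻¹)
        = (Wset m n k).filter (fun W => sta m n W = x) := by
      apply Finset.filter_congr
      intro W _
      show (gprod m n W = g * h⁻¹) ↔ (sta m n W = x)
      rw [hx]
      unfold sta
      exact inv_inj.symm
    rw [hfe, sum_split]
  -- counting facts
  have hT : (n*m)^k = NG * A + Bt := total_eq m n k x
  have hBle : B ≤ Bt := by
    apply Finset.card_le_card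
    intro W hW
    simp only [Finset.mem_filter] at hW ⊢
    exact ⟨hW.1, hW.2.2⟩
  have hBtle : Bt ≤ n * ((n-1) * m)^k := card_incomplete_le m n k
  have hNG1 : 1 ≤ NG := Fintype.card_pos
  -- real arithmetic
  have hMN : (0:ℝ) < ((m:ℝ)*n) := by
    have : (0:ℝ) < (m:ℝ) := by exact_mod_cast hm1
    have h2 : (0:ℝ) < (n:ℝ) := by exact_mod_cast hn1
    positivity
  have hD : (0:ℝ) < ((m:ℝ)*n)^k := pow_pos hMN k
  have hNGR : (0:ℝ) < (NG:ℝ) := by exact_mod_cast hNG1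
  have hDval : ((m:ℝ)*n)^k = (NG:ℝ) * A + Bt := by
    have h0 : ((m:ℝ)*n)^k = (((n*m)^k : ℕ) : ℝ) := by push_cast; ring
    rw [h0]
    exact_mod_cast hT
  have hB0 : (0:ℝ) ≤ (B:ℝ) := Nat.cast_nonneg B
  have hBt0 : (0:ℝ) ≤ (Bt:ℝ) := Nat.cast_nonneg Bt
  have hA0 : (0:ℝ) ≤ (A:ℝ) := Nat.cast_nonneg A
  have hNG1R : (1:ℝ) ≤ (NG:ℝ) := by exact_mod_cast hNG1
  have hBR : (B:ℝ) ≤ (Bt:ℝ) := by exact_mod_cast hBle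
  have hkey : |((A + B : ℕ) : ℝ) * NG - ((m:ℝ)*n)^k| ≤ (Bt : ℝ) * NG := by
    rw [abs_sub_le_iff]
    constructor
    · rw [hDval]
      push_cast
      have h1 : (B:ℝ) * NG ≤ (Bt:ℝ) * NG :=
        mul_le_mul_of_nonneg_right hBR (by linarith)
      linarith
    · rw [hDval]
      push_cast
      have h2 : (Bt:ℝ) * 1 ≤ (Bt:ℝ) * NG := mul_le_mul_of_nonneg_left hNG1R hBt0
      have h3 : (0:ℝ) ≤ (B:ℝ) * NG := mul_nonneg hB0 (by linarith)
      linarith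
  rw [hPk]
  have hlhs : (((m:ℝ)*n)^k)⁻¹ * ((A + B : ℕ) : ℝ) - 1 / (NG:ℝ)
      = (((A + B : ℕ) : ℝ) * NG - ((m:ℝ)*n)^k) / (((m:ℝ)*n)^k * NG) := by
    rw [inv_mul_eq_div, div_sub_div _ _ hD.ne' hNGR.ne', mul_one]
  rw [hlhs, abs_div, abs_of_pos (mul_pos hD hNGR)]
  calc |((A + B : ℕ) : ℝ) * NG - ((m:ℝ)*n)^k| / (((m:ℝ)*n)^k * NG)
      ≤ ((Bt : ℝ) * NG) / (((m:ℝ)*n)^k * NG) := by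
        gcongr
    _ = (Bt:ℝ) / ((m:ℝ)*n)^k := by
        rw [mul_div_mul_right _ _ (ne_of_gt hNGR)]
    _ ≤ ((n * ((n-1)*m)^k : ℕ) : ℝ) / ((m:ℝ)*n)^k := by
        have hc : (Bt:ℝ) ≤ ((n * ((n-1)*m)^k : ℕ) : ℝ) := by exact_mod_cast hBtle
        gcongr
    _ = (n : ℝ) * (((n-1) * m : ℕ) : ℝ)^k / ((m:ℝ)*n)^k := by
        push_cast
        ring

end TTR


/-- For `m > 1`, the top-to-random Markov chain on `G(m,1,n)` converges
to the uniform distribution at rate `(n−1)/n`: there is `α > 0` with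
`|P^k_{ij} − 1/(mⁿ n!)| ≤ α·((n−1)/n)^k` for all `k ≥ 1` and all `i, j`. -/
theorem convergence_to_uniform (m n : ℕ) [NeZero m] (hm : 1 < m) (hn : 0 < n) :
    ∃ α : ℝ, 0 < α ∧ ∀ k : ℕ, 1 ≤ k → ∀ g h : GG m n,
      |(P m n ^ k) g h - 1 / (m ^ n * n.factorial)| ≤ α * ((n - 1 : ℝ) / n) ^ k := by
  haveI : NeZero n := ⟨hn.ne'⟩
  refine ⟨(n : ℝ), by exact_mod_cast hn, ?_⟩
  intro k _ g h
  have hest := TTR.main_est m n k g h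
  have hm0 : (m:ℝ) ≠ 0 := by
    have := Nat.pos_of_ne_zero (NeZero.ne m)
    exact_mod_cast this.ne'
  have hn0 : (n:ℝ) ≠ 0 := by exact_mod_cast hn.ne'
  have hcard : ((Fintype.card (GG m n) : ℕ) : ℝ) = (m:ℝ) ^ n * (n.factorial : ℝ) := by
    rw [TTR.card_GG]
    push_cast
    ring
  have hrhs : (n : ℝ) * (((n-1) * m : ℕ) : ℝ)^k / (((m:ℝ) * n) ^ k)
      = (n:ℝ) * (((n:ℝ) - 1) / n) ^ k := by
    have h1 : (((n-1) * m : ℕ) : ℝ) = ((n:ℝ) - 1) * m := by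
      push_cast [Nat.cast_sub hn]
      ring
    rw [h1, mul_div_assoc, ← div_pow]
    congr 2
    rw [mul_comm (m:ℝ) (n:ℝ), mul_div_mul_right _ _ hm0]
  calc |(P m n ^ k) g h - 1 / ((m:ℝ) ^ n * (n.factorial : ℝ))|
      = |(P m n ^ k) g h - 1 / (Fintype.card (GG m n) : ℝ)| := by rw [hcard]
    _ ≤ (n : ℝ) * (((n-1) * m : ℕ) : ℝ)^k / (((m:ℝ) * n) ^ k) := hest
    _ = (n:ℝ) * (((n:ℝ) - 1) / n) ^ k := hrhs
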